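/- Let (V, ⟨·,·⟩) be a finite-dimensional real inner product space and ω a linear form on V, with g_L the flat standard stationary Lorentzian form on ℝ × V and F the Fermat metric. Let p, q ∈ V and t₀ ∈ ℝ. Then there exists a smooth curve γ : [0,1] → ℝ × V, γ(s) = (t(s), x(s)), with γ(0) = (0,p), γ(1) = (t₀,q), t'(s) > 0 and g_L(γ'(s), γ'(s)) ≤ 0 for every s (a future-directed causal curve from (0,p) to (t₀,q)), if and only if t₀ > 0 and t₀ ≥ F(q − p). -/

import Mathlib

open scoped RealInnerProductSpace


/-- If `a > 0` and `-a² + 2aω(v) + ⟨v,v⟩ ≤ 0` then `√(⟨v,v⟩+ω(v)²) + ω(v) ≤ a`. -/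
lemma fermat_key {V : Type*} [NormedAddCommGroup V] [InnerProductSpace ℝ V]
    (ω : V →ₗ[ℝ] ℝ) (v : V) (a : ℝ) (ha : 0 < a)
    (h : -(a * a) + a * ω v + a * ω v + ⟪v, v⟫ ≤ 0) :
    Real.sqrt (⟪v, v⟫ + (ω v) ^ 2) + ω v ≤ a := by
  have hvv : (0:ℝ) ≤ ⟪v, v⟫ := real_inner_self_nonneg
  have h1 : 0 ≤ a - ω v := by nlinarith
  have h2 : ⟪v, v⟫ + (ω v) ^ 2 ≤ (a - ω v) ^ 2 := by nlinarith
  have h3 := Real.sqrt_le_sqrt h2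
  rw [Real.sqrt_sq h1] at h3
  linarith

/-- Cauchy–Schwarz for the modified inner product `⟨v,w⟩ + ω(v)ω(w)`. -/
lemma fermat_cs {V : Type*} [NormedAddCommGroup V] [InnerProductSpace ℝ V]
    (ω : V →ₗ[ℝ] ℝ) (v w : V) :
    ⟪v, w⟫ + ω v * ω w ≤
      Real.sqrt (⟪v, v⟫ + (ω v) ^ 2) * Real.sqrt (⟪w, w⟫ + (ω w) ^ 2) := by
  have hvv : (0:ℝ) ≤ ⟪v, v⟫ := real_inner_self_nonneg
  have hww : (0:ℝ) ≤ ⟪w, w⟫ := real_inner_self_nonneg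
  set A := Real.sqrt (⟪v, v⟫ + (ω v) ^ 2) with hA
  set B := Real.sqrt (⟪w, w⟫ + (ω w) ^ 2) with hB
  have hA0 : 0 ≤ A := Real.sqrt_nonneg _
  have hB0 : 0 ≤ B := Real.sqrt_nonneg _
  have hA2 : A ^ 2 = ⟪v, v⟫ + (ω v) ^ 2 := Real.sq_sqrt (by positivity)
  have hB2 : B ^ 2 = ⟪w, w⟫ + (ω w) ^ 2 := Real.sq_sqrt (by positivity)
  have hab : ⟪v, w⟫ ≤ ‖v‖ * ‖w‖ := real_inner_le_norm v w
  have hv : ‖v‖ ^ 2 = ⟪v, v⟫ := (real_inner_self_eq_norm_sq v).symm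
  have hw : ‖w‖ ^ 2 = ⟪w, w⟫ := (real_inner_self_eq_norm_sq w).symm
  set Y := ‖v‖ * ‖w‖ + ω v * ω w with hY
  have hAB2 : (A * B) ^ 2 = (⟪v, v⟫ + (ω v) ^ 2) * (⟪w, w⟫ + (ω w) ^ 2) := by
    rw [mul_pow, hA2, hB2]
  have hY2 : Y ^ 2 ≤ (A * B) ^ 2 := by
    rw [hAB2, hY]
    nlinarith [sq_nonneg (‖v‖ * ω w - ‖w‖ * ω v), norm_nonneg v, norm_nonneg w, hv, hw]
  have hYle : Y ≤ A * B := by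
    rcases le_or_gt Y 0 with h | h
    · exact h.trans (mul_nonneg hA0 hB0)
    · calc Y = Real.sqrt (Y ^ 2) := (Real.sqrt_sq h.le).symm
        _ ≤ Real.sqrt ((A * B) ^ 2) := Real.sqrt_le_sqrt hY2
        _ = A * B := Real.sqrt_sq (mul_nonneg hA0 hB0)
  linarith

/-- The flat standard stationary Lorentzian form on `ℝ × V`:
`g_L((τ,v),(σ,u)) = −τσ + τ·ω(u) + σ·ω(v) + ⟨v,u⟩`. -/
noncomputable def stdStationaryForm {V : Type*} [NormedAddCommGroup V]
    [InnerProductSpace ℝ V] (ω : V →ₗ[ℝ] ℝ) (x y : ℝ × V) : ℝ :=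
  -(x.1 * y.1) + x.1 * ω y.2 + y.1 * ω x.2 + ⟪x.2, y.2⟫

/-- In the flat standard stationary spacetime, there is a smooth future-directed
causal curve from `(0,p)` to `(t₀,q)` if and only if `t₀ > 0` and `t₀ ≥ F(q − p)`,
where `F(v) = √(⟨v,v⟩ + ω(v)²) + ω(v)` is the Fermat metric. -/
theorem causal_future_eq_closed_fermat_ball
    {V : Type*} [NormedAddCommGroup V] [InnerProductSpace ℝ V] [FiniteDimensional ℝ V]
    (ω : V →ₗ[ℝ] ℝ)
    (F : V → ℝ)
    (hF : ∀ v : V, F v = Real.sqrt (⟪v, v⟫ + (ω v) ^ 2) + ω v)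
    (p q : V) (t₀ : ℝ) :
    (∃ t : ℝ → ℝ, ∃ x : ℝ → V,
      ContDiff ℝ (⊤ : ℕ∞) t ∧ ContDiff ℝ (⊤ : ℕ∞) x ∧
      t 0 = 0 ∧ x 0 = p ∧ t 1 = t₀ ∧ x 1 = q ∧
      ∀ s ∈ Set.Icc (0 : ℝ) 1, 0 < deriv t s ∧
        stdStationaryForm ω (deriv t s, deriv x s) (deriv t s, deriv x s) ≤ 0)
    ↔ (0 < t₀ ∧ F (q - p) ≤ t₀) := by
  have hωc : Continuous ω := ω.continuous_of_finiteDimensional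
  constructor
  · rintro ⟨t, x, ht, hx, ht0, hx0, ht1, hx1, hcond⟩
    -- derivatives are continuous
    have hdt : Continuous (deriv t) := ht.continuous_deriv (by exact_mod_cast le_top)
    have hdx : Continuous (deriv x) := hx.continuous_deriv (by exact_mod_cast le_top)
    have hti : IntervalIntegrable (deriv t) MeasureTheory.volume 0 1 :=
      hdt.intervalIntegrable 0 1
    have hxi : IntervalIntegrable (deriv x) MeasureTheory.volume 0 1 :=
      hdx.intervalIntegrable 0 1
    have hFT : ∫ s in (0:ℝ)..1, deriv t s = t₀ := by
      rw [intervalIntegral.integral_deriv_eq_sub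
        (fun s _ => (ht.differentiable (by simp)) s) hti, ht1, ht0, sub_zero]
    have hFX : ∫ s in (0:ℝ)..1, deriv x s = q - p := by
      rw [intervalIntegral.integral_deriv_eq_sub
        (fun s _ => (hx.differentiable (by simp)) s) hxi, hx1, hx0]
    have ht₀ : 0 < t₀ := by
      rw [← hFT]
      exact intervalIntegral.intervalIntegral_pos_of_pos_on hti
        (fun s hs => (hcond s ⟨hs.1.le, hs.2.le⟩).1) one_pos
    refine ⟨ht₀, ?_⟩
    set w := q - p with hw
    -- pointwise bound: F(x'(s)) ≤ t'(s)
    have hpt : ∀ s ∈ Set.Icc (0:ℝ) 1,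
        Real.sqrt (⟪deriv x s, deriv x s⟫ + (ω (deriv x s)) ^ 2) + ω (deriv x s)
          ≤ deriv t s := by
      intro s hs
      obtain ⟨ha, hc⟩ := hcond s hs
      refine fermat_key ω (deriv x s) (deriv t s) ha ?_
      simpa [stdStationaryForm] using hc
    set D := ⟪w, w⟫ + (ω w) ^ 2 with hD
    have hD0 : (0:ℝ) ≤ D := add_nonneg real_inner_self_nonneg (sq_nonneg _)
    rcases eq_or_lt_of_le hD0 with hDz | hDpos
    · -- degenerate case: F w = 0
      have hvv : (0:ℝ) ≤ ⟪w, w⟫ := real_inner_self_nonneg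
      have hωw : (ω w) ^ 2 = 0 := by nlinarith [sq_nonneg (ω w)]
      have hωw' : ω w = 0 := by
        have := sq_eq_zero_iff.mp hωw; exact this
      rw [hF, ← hD, ← hDz, Real.sqrt_zero, hωw', add_zero]
      exact ht₀.le
    · set R := Real.sqrt D with hR
      have hRpos : 0 < R := Real.sqrt_pos.mpr hDpos
      have hR2 : R ^ 2 = D := Real.sq_sqrt hD0
      -- the linear functional calibrating F at w
      set g : ℝ → ℝ := fun s => R⁻¹ * ⟪w, deriv x s⟫ + (ω w / R + 1) * ω (deriv x s)
        with hg
      have hgc : Continuous g := by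
        apply Continuous.add
        · exact continuous_const.mul (continuous_const.inner hdx)
        · exact continuous_const.mul (hωc.comp hdx)
      have hgi : IntervalIntegrable g MeasureTheory.volume 0 1 :=
        hgc.intervalIntegrable 0 1
      -- pointwise: g s ≤ deriv t s
      have hmono : ∀ s ∈ Set.Icc (0:ℝ) 1, g s ≤ deriv t s := by
        intro s hs
        set v := deriv x s with hv
        have hcs := fermat_cs ω v w
        have h1 : g s = (⟪v, w⟫ + ω v * ω w) / R + ω v := by
          rw [hg]
          simp only [real_inner_comm w v]
          field_simp
          ring
        have h2 : (⟪v, w⟫ + ω v * ω w) / R ≤ Real.sqrt (⟪v, v⟫ + (ω v) ^ 2) := by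
          rw [div_le_iff₀ hRpos]
          exact hcs
        have h3 := hpt s hs
        rw [h1]
        linarith
      -- integral computation: ∫ g = F w
      have hI1 : ∫ s in (0:ℝ)..1, ⟪w, deriv x s⟫ = ⟪w, w⟫ := by
        have := (innerSL ℝ w).intervalIntegral_comp_comm hxi
        simpa [hFX] using this
      have hI2 : ∫ s in (0:ℝ)..1, ω (deriv x s) = ω w := by
        have := (LinearMap.toContinuousLinearMap ω).intervalIntegral_comp_comm hxi
        simpa [hFX] using this
      have hIg : ∫ s in (0:ℝ)..1, g s = F w := by
        have hia : IntervalIntegrable (fun s => R⁻¹ * ⟪w, deriv x s⟫)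
            MeasureTheory.volume 0 1 :=
          (continuous_const.mul (continuous_const.inner hdx)).intervalIntegrable 0 1
        have hic : Continuous (fun s => ω (deriv x s)) := hωc.comp hdx
        have hib : IntervalIntegrable (fun s => (ω w / R + 1) * ω (deriv x s))
            MeasureTheory.volume 0 1 :=
          (continuous_const.mul hic).intervalIntegrable 0 1
        rw [hg]
        rw [intervalIntegral.integral_add hia hib]
        rw [intervalIntegral.integral_const_mul, intervalIntegral.integral_const_mul,
          hI1, hI2, hF, ← hD, ← hR]
        have : R⁻¹ * ⟪w, w⟫ + (ω w / R + 1) * ω w = (⟪w, w⟫ + (ω w) ^ 2) / R + ω w := by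
          field_simp; ring
        rw [this, ← hD]
        have : D / R = R := by
          rw [eq_comm, eq_div_iff hRpos.ne', ← hR2]; ring
        rw [this]
      calc F w = ∫ s in (0:ℝ)..1, g s := hIg.symm
        _ ≤ ∫ s in (0:ℝ)..1, deriv t s :=
            intervalIntegral.integral_mono_on zero_le_one hgi hti hmono
        _ = t₀ := hFT
  · rintro ⟨ht₀, hFle⟩
    set w := q - p with hw
    refine ⟨fun s => t₀ * s, fun s => p + s • w, ?_, ?_, by simp, by simp, by simp,
      by simp [hw], ?_⟩
    · exact contDiff_const.mul contDiff_id
    · exact contDiff_const.add (contDiff_id.smul contDiff_const)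
    · have hdt : ∀ s : ℝ, deriv (fun s => t₀ * s) s = t₀ := by
        intro s
        simpa using ((hasDerivAt_id s).const_mul t₀).deriv
      have hdx : ∀ s : ℝ, deriv (fun s : ℝ => p + s • w) s = w := by
        intro s
        have : HasDerivAt (fun s : ℝ => p + s • w) ((1:ℝ) • w) s :=
          (((hasDerivAt_id s).smul_const w).const_add p)
        simpa using this.deriv
      intro s _
      rw [hdt, hdx]
      refine ⟨ht₀, ?_⟩
      have hvv : (0:ℝ) ≤ ⟪w, w⟫ := real_inner_self_nonneg
      have hD0 : (0:ℝ) ≤ ⟪w, w⟫ + (ω w) ^ 2 := add_nonneg hvv (sq_nonneg _)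
      rw [hF] at hFle
      have h1 : Real.sqrt (⟪w, w⟫ + (ω w) ^ 2) ≤ t₀ - ω w := by linarith
      have h2 : ⟪w, w⟫ + (ω w) ^ 2 ≤ (t₀ - ω w) ^ 2 := by
        nlinarith [Real.sq_sqrt hD0, Real.sqrt_nonneg (⟪w, w⟫ + (ω w) ^ 2)]
      simp only [stdStationaryForm]
      nlinarith
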